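/- Let $-3 < \gamma \leq 1$ and $c > 0$. There exists $C > 0$ such that for all $v \in \mathbb{R}^3$, $\int_{\mathbb{R}^3} \frac{(1 + |v| + |u|)^{\gamma - 1}}{|u|} e^{-c(|u|^2 + |v \cdot u|/|u|)}\, du \leq C (1+|v|)^{\gamma - 2}$. -/

import Mathlib

open MeasureTheory
open scoped RealInnerProductSpace

open Real Set

local notation "E3" => EuclideanSpace ℝ (Fin 3)


noncomputable def f1 (c t : ℝ) : ℝ := |t| ^ (-(1:ℝ)/2) * Real.exp (-(c/2) * t^2)
noncomputable def f0 (c m t : ℝ) : ℝ :=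
  Real.exp (-(c/2) * t^2) * Real.exp (-(c/2) * (m * |t|) ^ ((2:ℝ)/3))

lemma f1_nonneg (c t : ℝ) : 0 ≤ f1 c t :=
  mul_nonneg (Real.rpow_nonneg (abs_nonneg t) _) (Real.exp_pos _).le

lemma f0_nonneg (c m t : ℝ) : 0 ≤ f0 c m t :=
  mul_nonneg (Real.exp_pos _).le (Real.exp_pos _).le

lemma measurable_f1 (c : ℝ) : Measurable (f1 c) := by
  unfold f1; fun_prop

lemma measurable_f0 (c m : ℝ) : Measurable (f0 c m) := by
  unfold f0; fun_prop

lemma integrable_f1 {c : ℝ} (hc : 0 < c) : Integrable (f1 c) := by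
  have hb : 0 < c / 2 := by linarith
  have hs : (-1 : ℝ) < -(1:ℝ)/2 := by norm_num
  have hIoi : IntegrableOn (f1 c) (Ioi 0) := by
    refine ((integrableOn_rpow_mul_exp_neg_mul_sq hb hs)).congr_fun
      (fun x hx => ?_) measurableSet_Ioi
    unfold f1
    rw [abs_of_pos hx]
  rw [← integrableOn_univ, ← Iio_union_Ici (a := (0:ℝ)), integrableOn_union,
    integrableOn_Ici_iff_integrableOn_Ioi]
  refine ⟨?_, hIoi⟩
  rw [← Measure.map_neg_eq_self (volume : Measure ℝ)]
  have m : MeasurableEmbedding fun x : ℝ => -x :=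
    (Homeomorph.neg ℝ).measurableEmbedding
  rw [m.integrableOn_map_iff]
  have : (fun x : ℝ => f1 c (-x)) = f1 c := by
    funext x; unfold f1; rw [abs_neg, neg_sq]
  simpa [Function.comp_def, this, neg_Iio] using hIoi

example : True := trivial
lemma f0_le_gauss {c m : ℝ} (hc : 0 < c) (hm : 0 ≤ m) (t : ℝ) :
    f0 c m t ≤ Real.exp (-(c/2) * t^2) := by
  have h : Real.exp (-(c/2) * (m * |t|) ^ ((2:ℝ)/3)) ≤ 1 := by
    rw [Real.exp_le_one_iff]
    exact mul_nonpos_of_nonpos_of_nonneg (by linarith)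
      (Real.rpow_nonneg (by positivity) _)
  exact mul_le_of_le_one_right (Real.exp_pos _).le h

lemma integrable_f0 {c : ℝ} (hc : 0 < c) {m : ℝ} (hm : 0 ≤ m) : Integrable (f0 c m) := by
  refine (integrable_exp_neg_mul_sq (show 0 < c/2 by linarith)).mono'
    (show Measurable (f0 c m) by unfold f0; fun_prop).aestronglyMeasurable ?_
  filter_upwards with t
  rw [Real.norm_eq_abs, abs_of_nonneg (f0_nonneg c m t)]
  exact f0_le_gauss hc hm t

lemma exp_cube {x : ℝ} (hx : 0 ≤ x) : x^3/6 ≤ Real.exp x := by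
  have h := Real.sum_le_exp_of_nonneg hx 4
  simp [Finset.sum_range_succ, Nat.factorial] at h
  nlinarith [pow_nonneg hx 2, hx]

lemma key2 {c : ℝ} (hc : 0 < c) {z : ℝ} (hz : 0 ≤ z) :
    Real.exp (-(c/2) * z ^ ((2:ℝ)/3)) ≤ (1 + 48/c^3) * (1 + z^2)⁻¹ := by
  set E := Real.exp ((c/2) * z ^ ((2:ℝ)/3)) with hE
  have hEpos : 0 < E := Real.exp_pos _
  have hcube : ((c/2) * z ^ ((2:ℝ)/3))^3 = c^3/8 * z^2 := by
    rw [mul_pow, ← Real.rpow_natCast (z ^ ((2:ℝ)/3)) 3, ← Real.rpow_mul hz,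
      show ((2:ℝ)/3 * (3:ℕ) : ℝ) = ((2:ℕ):ℝ) by push_cast; ring, Real.rpow_natCast]
    ring
  have hE3 : c^3/8 * z^2 / 6 ≤ E := by
    rw [← hcube]
    exact exp_cube (mul_nonneg (by linarith) (Real.rpow_nonneg hz _))
  have h3 : (0:ℝ) < 1 + z^2 := by positivity
  have hK : (0:ℝ) < 1 + 48/c^3 := by positivity
  have h2 : 1 + z^2 ≤ (1 + 48/c^3) * E := by
    have hz2 : z^2 ≤ 48/c^3 * E := by
      rw [div_mul_eq_mul_div, le_div_iff₀ (by positivity)]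
      nlinarith
    have hE1 : (1:ℝ) ≤ E :=
      Real.one_le_exp (mul_nonneg (by linarith) (Real.rpow_nonneg hz _))
    nlinarith
  have h4 : Real.exp (-(c/2) * z ^ ((2:ℝ)/3)) = E⁻¹ := by
    rw [hE, ← Real.exp_neg]; ring_nf
  rw [h4]
  calc E⁻¹ = (1+z^2) * ((1+z^2)⁻¹ * E⁻¹) := by field_simp
    _ ≤ ((1 + 48/c^3) * E) * ((1+z^2)⁻¹ * E⁻¹) := by
        apply mul_le_mul_of_nonneg_right h2 (by positivity)
    _ = (1 + 48/c^3) * (1+z^2)⁻¹ := by field_simp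

lemma exp_split {c : ℝ} (hc : 0 < c) {t a : ℝ} (ht : 0 < t) (ha : 0 ≤ a) :
    Real.exp (-c * (t^2 + a/t)) ≤
      Real.exp (-(c/2)*t^2) * Real.exp (-(c/2) * a ^ ((2:ℝ)/3)) := by
  rw [← Real.exp_add, Real.exp_le_exp]
  have key : a ^ ((2:ℝ)/3) ≤ t^2 + 2*(a/t) := by
    rcases le_or_gt (a ^ ((1:ℝ)/3)) t with h | h
    · have h1 : a ^ ((2:ℝ)/3) = (a ^ ((1:ℝ)/3))^2 := by
        rw [← Real.rpow_natCast (a ^ ((1:ℝ)/3)) 2, ← Real.rpow_mul ha]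
        norm_num
      have h2 : (a ^ ((1:ℝ)/3))^2 ≤ t^2 :=
        pow_le_pow_left₀ (Real.rpow_nonneg ha _) h 2
      have h0 : 0 ≤ a/t := div_nonneg ha ht.le
      linarith [h1 ▸ h2]
    · rcases eq_or_lt_of_le ha with rfl | hapos
      · rw [Real.zero_rpow (by norm_num)]
        have h0 : 0 ≤ (0:ℝ)/t := by positivity
        nlinarith
      · have h1 : a / a ^ ((1:ℝ)/3) ≤ a / t :=
          div_le_div_of_nonneg_left ha ht h.le
        have h2 : a / a ^ ((1:ℝ)/3) = a ^ ((2:ℝ)/3) := by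
          rw [show ((2:ℝ)/3) = 1 - 1/3 by norm_num, Real.rpow_sub hapos, Real.rpow_one]
        have h0 : 0 ≤ a/t := div_nonneg ha ht.le
        nlinarith
  nlinarith [div_nonneg ha ht.le]

lemma integral_f0_le {c : ℝ} (hc : 0 < c) {m : ℝ} (hm : 0 ≤ m) :
    ∫ t, f0 c m t ≤
      (2*(∫ t : ℝ, Real.exp (-(c/2) * t^2)) + 2*(1+48/c^3)*π) / (1+m) := by
  have hb : 0 < c/2 := by linarith
  set G := ∫ t : ℝ, Real.exp (-(c/2) * t^2) with hG
  have hGnn : 0 ≤ G := integral_nonneg fun t => (Real.exp_pos _).le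
  have hK : (0:ℝ) < 1 + 48/c^3 := by positivity
  have hInn : 0 ≤ ∫ t, f0 c m t := integral_nonneg fun t =>
    mul_nonneg (Real.exp_pos _).le (Real.exp_pos _).le
  have h1m : (0:ℝ) < 1 + m := by linarith
  rw [le_div_iff₀ h1m]
  rcases le_or_gt m 1 with h | h
  · have hIG : ∫ t, f0 c m t ≤ G :=
      integral_mono (integrable_f0 hc hm) (integrable_exp_neg_mul_sq hb)
        (f0_le_gauss hc hm)
    nlinarith [Real.pi_pos]
  · have hmpos : 0 < m := by linarith
    have hIK : ∫ t, f0 c m t ≤ (1+48/c^3) * π / m := by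
      have hint : Integrable fun t : ℝ => (1+48/c^3) * (1 + (m*t)^2)⁻¹ :=
        (integrable_inv_one_add_sq.comp_mul_left' hmpos.ne').const_mul _
      have hptw : ∀ t, f0 c m t ≤ (1+48/c^3) * (1 + (m*t)^2)⁻¹ := by
        intro t
        have e1 : Real.exp (-(c/2) * t^2) ≤ 1 := by
          rw [Real.exp_le_one_iff]; nlinarith [sq_nonneg t]
        have e2 := key2 hc (z := m * |t|) (by positivity)
        have hzz : (m * |t|)^2 = (m*t)^2 := by
          rw [mul_pow, mul_pow, sq_abs]
        rw [hzz] at e2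
        calc f0 c m t ≤ Real.exp (-(c/2) * (m * |t|) ^ ((2:ℝ)/3)) := by
              unfold f0
              exact mul_le_of_le_one_left (Real.exp_pos _).le e1
          _ ≤ (1+48/c^3) * (1 + (m*t)^2)⁻¹ := e2
      have := integral_mono (integrable_f0 hc hm) hint hptw
      rw [MeasureTheory.integral_const_mul] at this
      have hval : (∫ t : ℝ, (1 + (m*t)^2)⁻¹) = |m⁻¹| * π := by
        have := MeasureTheory.Measure.integral_comp_mul_left
          (fun s : ℝ => (1 + s^2)⁻¹) m
        rw [integral_univ_inv_one_add_sq] at this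
        simpa [smul_eq_mul] using this
      rw [hval, abs_of_pos (inv_pos.mpr hmpos)] at this
      calc ∫ t, f0 c m t ≤ (1+48/c^3) * (m⁻¹ * π) := this
        _ = (1+48/c^3) * π / m := by field_simp
    have h2 : ((1+48/c^3) * π / m) * (1+m) ≤ 2*(1+48/c^3)*π := by
      rw [div_mul_eq_mul_div, div_le_iff₀ hmpos]
      nlinarith [mul_nonneg (mul_pos hK Real.pi_pos).le (by linarith : (0:ℝ) ≤ m - 1)]
    linarith [mul_le_mul_of_nonneg_right hIK h1m.le, h2, hGnn]
lemma exists_adapted_basis (v : E3) :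
    ∃ b : OrthonormalBasis (Fin 3) ℝ E3,
      ∀ u : E3, |⟪v, u⟫| = ‖v‖ * |b.repr u 0| := by
  classical
  set w : E3 := if h : v = 0 then EuclideanSpace.single 0 (1:ℝ) else ‖v‖⁻¹ • v with hw
  have hwnorm : ‖w‖ = 1 := by
    rw [hw]
    split_ifs with h
    · simp [EuclideanSpace.norm_single]
    · rw [norm_smul, norm_inv, norm_norm, inv_mul_cancel₀ (norm_ne_zero_iff.mpr h)]
  have hv : v = ‖v‖ • w := by
    rw [hw]
    split_ifs with h
    · simp [h]
    · rw [smul_smul, mul_inv_cancel₀ (norm_ne_zero_iff.mpr h), one_smul]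
  have hcard : Module.finrank ℝ E3 = Fintype.card (Fin 3) := by
    simp [finrank_euclideanSpace]
  have horth : Orthonormal ℝ (({0} : Set (Fin 3)).restrict (fun _ => w)) := by
    rw [orthonormal_iff_ite]
    intro i j
    have hss : Subsingleton ({0} : Set (Fin 3)) :=
      Set.subsingleton_singleton.coe_sort
    rw [Subsingleton.elim i j, if_pos rfl]
    show (⟪w, w⟫ : ℝ) = 1
    rw [real_inner_self_eq_norm_mul_norm, hwnorm]; norm_num
  obtain ⟨b, hb⟩ := horth.exists_orthonormalBasis_extension_of_card_eq hcard
  refine ⟨b, fun u => ?_⟩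
  have hb0 : b 0 = w := hb 0 rfl
  conv_lhs => rw [hv]
  rw [real_inner_smul_left, ← hb0, ← OrthonormalBasis.repr_apply_apply,
    abs_mul, abs_of_nonneg (norm_nonneg v)]

lemma ae_coord_ne (i : Fin 3) : ∀ᵐ x : E3, x i ≠ 0 := by
  let l : E3 →ₗ[ℝ] ℝ :=
    { toFun := fun x => x i, map_add' := fun x y => rfl, map_smul' := fun c x => rfl }
  have hker : (LinearMap.ker l : Set E3) = {x : E3 | x i = 0} := by
    ext x; simp [LinearMap.mem_ker, l]; exact Iff.rfl
  have hne : LinearMap.ker l ≠ ⊤ := by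
    intro h
    have : EuclideanSpace.single i (1:ℝ) ∈ LinearMap.ker l := by rw [h]; trivial
    rw [LinearMap.mem_ker] at this
    simp [l, EuclideanSpace.single_apply] at this
    change (EuclideanSpace.single i (1:ℝ)) i = 0 at this; simp at this
  have h0 : volume {x : E3 | x i = 0} = 0 := by
    rw [← hker]
    exact Measure.addHaar_submodule volume _ hne
  rw [ae_iff]
  simpa using h0

lemma integral_eucl_prod (F₀ F₁ F₂ : ℝ → ℝ) :
    ∫ x : E3, F₀ (x 0) * (F₁ (x 1) * F₂ (x 2))
      = (∫ t, F₀ t) * ((∫ t, F₁ t) * (∫ t, F₂ t)) := by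
  have hmp := (EuclideanSpace.volume_preserving_symm_measurableEquiv_toLp (Fin 3)).symm
  have key := hmp.integral_comp' (fun x : E3 => F₀ (x 0) * (F₁ (x 1) * F₂ (x 2)))
  have hPi := MeasureTheory.integral_fintype_prod_eq_prod (ι := Fin 3)
    (f := fun i : Fin 3 => ![F₀, F₁, F₂] i) (μ := fun _ => volume)
  have hfun : (fun y : Fin 3 → ℝ => ∏ i, ![F₀, F₁, F₂] i (y i))
      = fun y : Fin 3 → ℝ => F₀ (y 0) * (F₁ (y 1) * F₂ (y 2)) := by
    funext y
    simp [Fin.prod_univ_three, mul_assoc]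
  rw [hfun] at hPi
  simp only [Fin.prod_univ_three, Matrix.cons_val_zero, Matrix.cons_val_one, Matrix.head_cons,
    Matrix.cons_val_two, Matrix.tail_cons] at hPi
  calc ∫ x : E3, F₀ (x 0) * (F₁ (x 1) * F₂ (x 2))
      = ∫ y : Fin 3 → ℝ, F₀ (y 0) * (F₁ (y 1) * F₂ (y 2)) := key.symm
    _ = (∫ t, F₀ t) * ((∫ t, F₁ t) * (∫ t, F₂ t)) := by rw [MeasureTheory.volume_pi, hPi]; ring

lemma integrable_eucl_prod (F₀ F₁ F₂ : ℝ → ℝ) (h₀ : Integrable F₀)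
    (h₁ : Integrable F₁) (h₂ : Integrable F₂) :
    Integrable (fun x : E3 => F₀ (x 0) * (F₁ (x 1) * F₂ (x 2))) := by
  have hPi : Integrable (fun y : Fin 3 → ℝ => ∏ i, ![F₀, F₁, F₂] i (y i)) :=
    MeasureTheory.Integrable.fintype_prod (fun i => by fin_cases i <;> assumption)
  have hfun : (fun y : Fin 3 → ℝ => ∏ i, ![F₀, F₁, F₂] i (y i))
      = fun y : Fin 3 → ℝ => F₀ (y 0) * (F₁ (y 1) * F₂ (y 2)) := by
    funext y
    simp [Fin.prod_univ_three, mul_assoc]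
  rw [hfun] at hPi
  have hmp := (EuclideanSpace.volume_preserving_symm_measurableEquiv_toLp (Fin 3)).symm
  rw [← hmp.integrable_comp_emb (MeasurableEquiv.measurableEmbedding _)]
  exact hPi

lemma norm_sq_eucl (x : E3) : ‖x‖^2 = x 0^2 + x 1^2 + x 2^2 := by
  rw [EuclideanSpace.norm_eq, Real.sq_sqrt (by positivity)]
  simp [Fin.sum_univ_three, sq_abs]

lemma inv_norm_le (x : E3) (h1 : x 1 ≠ 0) (h2 : x 2 ≠ 0) :
    ‖x‖⁻¹ ≤ |x 1| ^ (-(1:ℝ)/2) * |x 2| ^ (-(1:ℝ)/2) := by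
  have hb1 : 0 < |x 1| ^ ((1:ℝ)/2) := Real.rpow_pos_of_pos (abs_pos.mpr h1) _
  have hb2 : 0 < |x 2| ^ ((1:ℝ)/2) := Real.rpow_pos_of_pos (abs_pos.mpr h2) _
  have hsq : ∀ a : ℝ, 0 ≤ a → (a ^ ((1:ℝ)/2))^2 = a := fun a ha => by
    rw [← Real.rpow_natCast (a ^ ((1:ℝ)/2)) 2, ← Real.rpow_mul ha,
      show ((1:ℝ)/2 * (2:ℕ) : ℝ) = 1 by push_cast; ring, Real.rpow_one]
  have hlow : |x 1| ^ ((1:ℝ)/2) * |x 2| ^ ((1:ℝ)/2) ≤ ‖x‖ := by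
    have hsq2 : (|x 1| ^ ((1:ℝ)/2) * |x 2| ^ ((1:ℝ)/2))^2 ≤ ‖x‖^2 := by
      rw [mul_pow, hsq _ (abs_nonneg _), hsq _ (abs_nonneg _), norm_sq_eucl]
      nlinarith [sq_nonneg (x 0), sq_nonneg (|x 1| - |x 2|), sq_abs (x 1), sq_abs (x 2)]
    calc |x 1| ^ ((1:ℝ)/2) * |x 2| ^ ((1:ℝ)/2)
        = Real.sqrt ((|x 1| ^ ((1:ℝ)/2) * |x 2| ^ ((1:ℝ)/2))^2) :=
          (Real.sqrt_sq (by positivity)).symm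
      _ ≤ Real.sqrt (‖x‖^2) := Real.sqrt_le_sqrt hsq2
      _ = ‖x‖ := Real.sqrt_sq (norm_nonneg x)
  have hinv := inv_anti₀ (mul_pos hb1 hb2) hlow
  rw [mul_inv] at hinv
  rw [show (-(1:ℝ)/2) = -((1:ℝ)/2) by norm_num, Real.rpow_neg (abs_nonneg _),
    Real.rpow_neg (abs_nonneg _)]
  exact hinv

/-- Key kernel-integrability estimate:
`∫ (1+|v|+|u|)^{γ-1}/|u| · e^{-c(|u|² + |v·u|/|u|)} du ≤ C (1+|v|)^{γ-2}`. -/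
theorem kernel_integral_bound (γ c : ℝ) (hγ₁ : -3 < γ) (hγ₂ : γ ≤ 1) (hc : 0 < c) :
    ∃ C > 0, ∀ v : EuclideanSpace ℝ (Fin 3),
      ∫ u : EuclideanSpace ℝ (Fin 3),
          (1 + ‖v‖ + ‖u‖) ^ (γ - 1) / ‖u‖
            * Real.exp (-c * (‖u‖ ^ 2 + |⟪v, u⟫| / ‖u‖))
        ≤ C * (1 + ‖v‖) ^ (γ - 2) := by
  have hb : 0 < c/2 := by linarith
  have hGnn : 0 ≤ ∫ t : ℝ, Real.exp (-(c/2) * t^2) :=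
    integral_nonneg fun t => (Real.exp_pos _).le
  have hBnn : 0 ≤ ∫ t, f1 c t := integral_nonneg (f1_nonneg c)
  have hKnn : (0:ℝ) ≤ 2*(1+48/c^3)*π := by positivity
  have hDnn : 0 ≤ 2*(∫ t : ℝ, Real.exp (-(c/2) * t^2)) + 2*(1+48/c^3)*π := by linarith
  have hDB : 0 ≤ (2*(∫ t : ℝ, Real.exp (-(c/2) * t^2)) + 2*(1+48/c^3)*π)
      * ((∫ t, f1 c t) * (∫ t, f1 c t)) :=
    mul_nonneg hDnn (mul_nonneg hBnn hBnn)
  refine ⟨(2*(∫ t : ℝ, Real.exp (-(c/2) * t^2)) + 2*(1+48/c^3)*π)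
      * ((∫ t, f1 c t) * (∫ t, f1 c t)) + 1, by linarith, fun v => ?_⟩
  have hm0 : 0 ≤ ‖v‖ := norm_nonneg v
  have h1m : 0 < 1 + ‖v‖ := by linarith
  obtain ⟨bas, hbv⟩ := exists_adapted_basis v
  have hcomp := (bas.measurePreserving_measurableEquiv.symm).integral_comp'
    (fun u : E3 => (1 + ‖v‖ + ‖u‖) ^ (γ - 1) / ‖u‖
      * Real.exp (-c * (‖u‖ ^ 2 + |⟪v, u⟫| / ‖u‖)))
  have hgint : Integrable (fun x : E3 =>
      (1+‖v‖)^(γ-1) * (f0 c ‖v‖ (x 0) * (f1 c (x 1) * f1 c (x 2)))) :=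
    (integrable_eucl_prod _ _ _ (integrable_f0 hc hm0)
      (integrable_f1 hc) (integrable_f1 hc)).const_mul _
  have hA0 : (0 : E3 → ℝ) ≤ᵐ[volume] fun x : E3 =>
      (1 + ‖v‖ + ‖x‖) ^ (γ - 1) / ‖x‖
        * Real.exp (-c * (‖x‖ ^ 2 + ‖v‖ * |x 0| / ‖x‖)) := by
    filter_upwards with x
    exact mul_nonneg (div_nonneg (Real.rpow_nonneg (by positivity) _) (norm_nonneg x))
      (Real.exp_pos _).le
  have hle : (fun x : E3 =>
      (1 + ‖v‖ + ‖x‖) ^ (γ - 1) / ‖x‖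
        * Real.exp (-c * (‖x‖ ^ 2 + ‖v‖ * |x 0| / ‖x‖)))
      ≤ᵐ[volume] fun x : E3 =>
      (1+‖v‖)^(γ-1) * (f0 c ‖v‖ (x 0) * (f1 c (x 1) * f1 c (x 2))) := by
    filter_upwards [ae_coord_ne 1, ae_coord_ne 2] with x hx1 hx2
    have hxpos : 0 < ‖x‖ := by
      rw [norm_pos_iff]
      intro h
      exact hx1 (by rw [h]; rfl)
    have h1 : (1+‖v‖+‖x‖)^(γ-1) ≤ (1+‖v‖)^(γ-1) :=
      Real.rpow_le_rpow_of_nonpos h1m (by linarith [norm_nonneg x]) (by linarith)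
    have h2 := inv_norm_le x hx1 hx2
    have h3 := exp_split hc hxpos (mul_nonneg hm0 (abs_nonneg (x 0)))
    have h4 : Real.exp (-(c/2) * ‖x‖^2)
        = Real.exp (-(c/2)*(x 0)^2)
          * (Real.exp (-(c/2)*(x 1)^2) * Real.exp (-(c/2)*(x 2)^2)) := by
      rw [← Real.exp_add, ← Real.exp_add]
      congr 1
      rw [norm_sq_eucl]
      ring
    calc (1 + ‖v‖ + ‖x‖) ^ (γ - 1) / ‖x‖
          * Real.exp (-c * (‖x‖ ^ 2 + ‖v‖ * |x 0| / ‖x‖))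
        = (1 + ‖v‖ + ‖x‖) ^ (γ - 1) * ‖x‖⁻¹
          * Real.exp (-c * (‖x‖ ^ 2 + ‖v‖ * |x 0| / ‖x‖)) := by rw [div_eq_mul_inv]
      _ ≤ ((1+‖v‖)^(γ-1) * (|x 1| ^ (-(1:ℝ)/2) * |x 2| ^ (-(1:ℝ)/2)))
          * (Real.exp (-(c/2)*‖x‖^2) * Real.exp (-(c/2)*(‖v‖*|x 0|)^((2:ℝ)/3))) := by
          apply mul_le_mul
          · exact mul_le_mul h1 h2 (inv_nonneg.mpr (norm_nonneg x))
              (Real.rpow_nonneg h1m.le _)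
          · exact h3
          · exact (Real.exp_pos _).le
          · exact mul_nonneg (Real.rpow_nonneg h1m.le _)
              (mul_nonneg (Real.rpow_nonneg (abs_nonneg _) _)
                (Real.rpow_nonneg (abs_nonneg _) _))
      _ = (1+‖v‖)^(γ-1) * (f0 c ‖v‖ (x 0) * (f1 c (x 1) * f1 c (x 2))) := by
          rw [h4]
          unfold f0 f1
          ring
  have hpow : (1+‖v‖)^(γ-2) = (1+‖v‖)^(γ-1) / (1+‖v‖) := by
    rw [show γ - 2 = (γ-1) - 1 by ring, Real.rpow_sub h1m, Real.rpow_one]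
  calc ∫ u : E3, (1 + ‖v‖ + ‖u‖) ^ (γ - 1) / ‖u‖
        * Real.exp (-c * (‖u‖ ^ 2 + |⟪v, u⟫| / ‖u‖))
      = ∫ x : E3, (1 + ‖v‖ + ‖x‖) ^ (γ - 1) / ‖x‖
          * Real.exp (-c * (‖x‖ ^ 2 + ‖v‖ * |x 0| / ‖x‖)) := by
        rw [← hcomp]
        congr 1
        funext x
        show (1 + ‖v‖ + ‖bas.repr.symm x‖) ^ (γ - 1) / ‖bas.repr.symm x‖
            * Real.exp (-c * (‖bas.repr.symm x‖ ^ 2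
              + |⟪v, bas.repr.symm x⟫| / ‖bas.repr.symm x‖))
          = (1 + ‖v‖ + ‖x‖) ^ (γ - 1) / ‖x‖
            * Real.exp (-c * (‖x‖ ^ 2 + ‖v‖ * |x 0| / ‖x‖))
        rw [bas.repr.symm.norm_map, hbv (bas.repr.symm x),
          LinearIsometryEquiv.apply_symm_apply]
    _ ≤ ∫ x : E3, (1+‖v‖)^(γ-1) * (f0 c ‖v‖ (x 0) * (f1 c (x 1) * f1 c (x 2))) :=
        integral_mono_of_nonneg hA0 hgint hle
    _ = (1+‖v‖)^(γ-1) * ((∫ t, f0 c ‖v‖ t) * ((∫ t, f1 c t) * (∫ t, f1 c t))) := by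
        rw [MeasureTheory.integral_const_mul, integral_eucl_prod]
    _ ≤ (1+‖v‖)^(γ-1) * (((2*(∫ t : ℝ, Real.exp (-(c/2) * t^2)) + 2*(1+48/c^3)*π)/(1+‖v‖))
          * ((∫ t, f1 c t) * (∫ t, f1 c t))) := by
        apply mul_le_mul_of_nonneg_left _ (Real.rpow_nonneg h1m.le _)
        exact mul_le_mul_of_nonneg_right (integral_f0_le hc hm0)
          (mul_nonneg hBnn hBnn)
    _ = ((2*(∫ t : ℝ, Real.exp (-(c/2) * t^2)) + 2*(1+48/c^3)*π)
          * ((∫ t, f1 c t) * (∫ t, f1 c t))) * ((1+‖v‖)^(γ-1) / (1+‖v‖)) := by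
        rw [div_eq_mul_inv, div_eq_mul_inv]
        ring
    _ = ((2*(∫ t : ℝ, Real.exp (-(c/2) * t^2)) + 2*(1+48/c^3)*π)
          * ((∫ t, f1 c t) * (∫ t, f1 c t))) * (1+‖v‖)^(γ-2) := by rw [hpow]
    _ ≤ ((2*(∫ t : ℝ, Real.exp (-(c/2) * t^2)) + 2*(1+48/c^3)*π)
          * ((∫ t, f1 c t) * (∫ t, f1 c t)) + 1) * (1+‖v‖)^(γ-2) :=
        mul_le_mul_of_nonneg_right (by linarith) (Real.rpow_nonneg h1m.le _)
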